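/- If a = 1 ∨ φ(1) for a normal completely positive map φ on a finite von Neumann algebra M with faithful normal trace τ, then ‖a^{-1/2} − 1‖₂ ≤ ‖φ(1) − 1‖₂^{1/2}. -/

import Mathlib

/- Common framework: a finite von Neumann algebra `M` on a Hilbert space `H` with a faithful
normal trace, normal completely positive maps, bimodular maps, and the `2`-norm. -/

open scoped ComplexOrder InnerProductSpace
open Filter Topology

noncomputable section

universe u

variable (H : Type u) [NormedAddCommGroup H] [InnerProductSpace ℂ H] [CompleteSpace H]

/-- The `2`-norm `‖x‖₂ = τ(x*x)^{1/2}` associated to a trace functional `τ`. -/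
def twoNorm (τ : (H →L[ℂ] H) →ₗ[ℂ] ℂ) (x : H →L[ℂ] H) : ℝ :=
  Real.sqrt (τ (star x * x)).re

/-- A linear functional on `B(H)` is normal (relative to the von Neumann algebra `M`) if it is
continuous for the weak operator topology on bounded balls of `M`. -/
def IsNormalFunctional (M : VonNeumannAlgebra H) (τ : (H →L[ℂ] H) →ₗ[ℂ] ℂ) : Prop :=
  ∀ r : ℝ, ContinuousOn
    (fun T : H →WOT[ℂ] H => τ ((ContinuousLinearMapWOT.linearEquiv (σ := RingHom.id ℂ) (E := H) (F := H) ℂ).symm.symm T))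
    ((ContinuousLinearMapWOT.linearEquiv (σ := RingHom.id ℂ) (E := H) (F := H) ℂ).symm '' (Metric.closedBall 0 r ∩ (M : Set (H →L[ℂ] H))))

/-- A faithful normal tracial state on a von Neumann algebra `M ⊆ B(H)`. -/
structure FaithfulNormalTrace (M : VonNeumannAlgebra H) where
  τ : (H →L[ℂ] H) →ₗ[ℂ] ℂ
  pos : ∀ x ∈ M, 0 ≤ τ (star x * x)
  faithful : ∀ x ∈ M, τ (star x * x) = 0 → x = 0
  tracial : ∀ x ∈ M, ∀ y ∈ M, τ (x * y) = τ (y * x)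
  unital : τ 1 = 1
  normal : IsNormalFunctional H M τ

/-- A linear map `φ : B(H) → B(H)` is normal (as a map of the von Neumann algebra `M`) if it is
continuous for the weak operator topology on bounded balls of `M`. -/
def IsNormalMap (M : VonNeumannAlgebra H) (φ : (H →L[ℂ] H) →ₗ[ℂ] (H →L[ℂ] H)) : Prop :=
  ∀ r : ℝ, ContinuousOn
    (fun T : H →WOT[ℂ] H =>
      (ContinuousLinearMapWOT.linearEquiv (σ := RingHom.id ℂ) (E := H) (F := H) ℂ).symm (φ ((ContinuousLinearMapWOT.linearEquiv (σ := RingHom.id ℂ) (E := H) (F := H) ℂ).symm.symm T)))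
    ((ContinuousLinearMapWOT.linearEquiv (σ := RingHom.id ℂ) (E := H) (F := H) ℂ).symm '' (Metric.closedBall 0 r ∩ (M : Set (H →L[ℂ] H))))

/-- Complete positivity of `φ` on `M`: for all `x₁, …, xₙ ∈ M` and `ξ₁, …, ξₙ ∈ H`,
`∑_{i,j} ⟨ξᵢ, φ(xᵢ* xⱼ) ξⱼ⟩ ≥ 0`. -/
def IsCompletelyPositive (M : VonNeumannAlgebra H)
    (φ : (H →L[ℂ] H) →ₗ[ℂ] (H →L[ℂ] H)) : Prop :=
  ∀ (n : ℕ) (x : Fin n → (H →L[ℂ] H)) (ξ : Fin n → H), (∀ i, x i ∈ M) →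
    0 ≤ ∑ i, ∑ j, ⟪ξ i, φ (star (x i) * x j) (ξ j)⟫_ℂ

/-- `φ` is a normal completely positive map from `M` to `M`. -/
def IsNormalCP (M : VonNeumannAlgebra H) (φ : (H →L[ℂ] H) →ₗ[ℂ] (H →L[ℂ] H)) : Prop :=
  (∀ x ∈ M, φ x ∈ M) ∧ IsNormalMap H M φ ∧ IsCompletelyPositive H M φ

/-- `N`-bimodularity of a map `φ : M → M`: `φ(axb) = aφ(x)b` for `a, b ∈ N`, `x ∈ M`. -/
def IsBimodular (M N : VonNeumannAlgebra H) (φ : (H →L[ℂ] H) →ₗ[ℂ] (H →L[ℂ] H)) : Prop :=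
  ∀ a ∈ N, ∀ b ∈ N, ∀ x ∈ M, φ (a * x * b) = a * φ x * b


section PowersStormerAux

variable {H}

lemma psAux_isClosed_centralizer (S : Set (H →L[ℂ] H)) : IsClosed (Set.centralizer S) := by
  have : Set.centralizer S = ⋂ s ∈ S, {x : H →L[ℂ] H | s * x = x * s} := by
    ext x; simp [Set.mem_centralizer_iff]
  rw [this]
  exact isClosed_biInter fun s _ => isClosed_eq (continuous_mul_left s) (continuous_mul_right s)

lemma psAux_vna_isClosed (M : VonNeumannAlgebra H) : IsClosed (M : Set (H →L[ℂ] H)) := by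
  rw [← M.centralizer_centralizer]
  exact psAux_isClosed_centralizer _

lemma psAux_selfAdjoint {b : H →L[ℂ] H} (hb : ∀ ξ : H, 0 ≤ ⟪ξ, b ξ⟫_ℂ) : IsSelfAdjoint b := by
  refine ContinuousLinearMap.isSelfAdjoint_iff_isSymmetric.mpr ?_
  rw [LinearMap.isSymmetric_iff_inner_map_self_real]
  intro x
  have h := hb x
  rw [Complex.le_def] at h
  have hz : ⟪x, (b : H →ₗ[ℂ] H) x⟫_ℂ = ((⟪x, (b : H →ₗ[ℂ] H) x⟫_ℂ).re : ℂ) :=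
    Complex.ext rfl (by simpa using h.2.symm)
  rw [← inner_conj_symm, hz]
  simp

lemma psAux_cfc_mem (M : VonNeumannAlgebra H) {b : H →L[ℂ] H} (hbM : b ∈ M)
    (hb : IsSelfAdjoint b) (f : ℝ → ℝ) (hf : Continuous f) : cfc f b ∈ M := by
  rw [cfc_real_eq_complex f hb]
  have hg : ContinuousOn (fun x : ℂ => (f x.re : ℂ)) (spectrum ℂ b) :=
    (Complex.continuous_ofReal.comp (hf.comp Complex.continuous_re)).continuousOn
  have h1 : cfc (fun x : ℂ => (f x.re : ℂ)) b ∈ StarAlgebra.elemental ℂ b := by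
    rw [cfc_apply _ b hb.isStarNormal hg, cfcHom_eq_of_isStarNormal]
    exact Subtype.coe_prop _
  exact StarAlgebra.elemental.le_of_mem (psAux_vna_isClosed M) hbM h1

/-- A nonnegative continuous function of a selfadjoint element is `star c * c`. -/
lemma psAux_cfc_eq_star_mul_self {b : H →L[ℂ] H} (hb : IsSelfAdjoint b)
    (g : ℝ → ℝ) (hg : Continuous g) (hg0 : ∀ t, 0 ≤ g t) :
    cfc g b = star (cfc (fun t => Real.sqrt (g t)) b) * cfc (fun t => Real.sqrt (g t)) b := by
  have hc : IsSelfAdjoint (cfc (fun t => Real.sqrt (g t)) b) := cfc_predicate _ b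
  have hsc : Continuous (fun t => Real.sqrt (g t)) := Real.continuous_sqrt.comp hg
  rw [hc.star_eq, ← cfc_mul (fun t => Real.sqrt (g t)) (fun t => Real.sqrt (g t)) b
      hsc.continuousOn hsc.continuousOn]
  exact cfc_congr fun t _ => (Real.mul_self_sqrt (hg0 t)).symm

lemma psAux_tr_pos_re (M : VonNeumannAlgebra H) (tr : FaithfulNormalTrace H M)
    {x : H →L[ℂ] H} (hx : x ∈ M) :
    tr.τ (star x * x) = ((tr.τ (star x * x)).re : ℂ) ∧ 0 ≤ (tr.τ (star x * x)).re := by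
  have h := tr.pos x hx
  rw [Complex.le_def] at h
  exact ⟨Complex.ext rfl (by simpa using h.2.symm), by simpa using h.1⟩

/-- Monotonicity of the trace along the continuous functional calculus. -/
lemma psAux_tr_mono (M : VonNeumannAlgebra H) (tr : FaithfulNormalTrace H M)
    {b : H →L[ℂ] H} (hbM : b ∈ M) (hb : IsSelfAdjoint b)
    (g h : ℝ → ℝ) (hgc : Continuous g) (hhc : Continuous h) (hle : ∀ t, g t ≤ h t) :
    (tr.τ (cfc g b)).re ≤ (tr.τ (cfc h b)).re := by
  set d : ℝ → ℝ := fun t => h t - g t with hd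
  have hdc : Continuous d := hhc.sub hgc
  have hd0 : ∀ t, 0 ≤ d t := fun t => sub_nonneg.2 (hle t)
  set c : H →L[ℂ] H := cfc (fun t => Real.sqrt (d t)) b with hcdef
  have hcM : c ∈ M := psAux_cfc_mem M hbM hb _ (Real.continuous_sqrt.comp hdc)
  have hsplit : cfc h b = cfc g b + star c * c := by
    rw [hcdef, ← psAux_cfc_eq_star_mul_self hb d hdc hd0,
      ← cfc_add b g d hgc.continuousOn hdc.continuousOn]
    exact cfc_congr fun t _ => by simp [hd]
  have hpos := (psAux_tr_pos_re M tr hcM).2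
  rw [hsplit, map_add]
  simp only [Complex.add_re]
  linarith

/-- The key pointwise inequality: `((max 1 t)^{-1/2} - 1)² ≤ |t - 1|`. -/
lemma psAux_pointwise (t : ℝ) :
    ((max 1 t) ^ (-(1 / 2 : ℝ)) - 1) * ((max 1 t) ^ (-(1 / 2 : ℝ)) - 1) ≤ |t - 1| := by
  rcases le_or_gt t 1 with ht | ht
  · rw [max_eq_left ht, Real.one_rpow]
    simpa using abs_nonneg (t - 1)
  · rw [max_eq_right ht.le]
    set u : ℝ := t ^ (-(1 / 2 : ℝ)) with hu
    have ht0 : (0 : ℝ) < t := lt_trans one_pos ht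
    have hu0 : 0 < u := Real.rpow_pos_of_pos ht0 _
    have hu1 : u ≤ 1 := Real.rpow_le_one_of_one_le_of_nonpos ht.le (by norm_num)
    have huu : u * u * t = 1 := by
      have hexp : (-(1 / 2 : ℝ)) + (-(1 / 2 : ℝ)) = -1 := by norm_num
      rw [hu, ← Real.rpow_add ht0, hexp, Real.rpow_neg_one]
      field_simp
    rw [abs_of_nonneg (by linarith : (0:ℝ) ≤ t - 1)]
    have h1 : (1 - u) * (1 - u) ≤ (1 - u) * (1 + u) := by nlinarith
    have h2 : (1 - u) * (1 + u) = 1 - u * u := by ring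
    have h3 : 1 - u * u ≤ t - 1 := by nlinarith [sq_nonneg (t - 1)]
    nlinarith

end PowersStormerAux

/-- **Powers–Størmer estimate.** If `a = 1 ∨ φ(1)` for a normal completely positive map `φ` on
a finite von Neumann algebra `M` with faithful normal trace `τ`, then
`‖a^{-1/2} − 1‖₂ ≤ ‖φ(1) − 1‖₂^{1/2}`. Here `1 ∨ φ(1)` and `a^{-1/2}` are given by the
continuous functional calculus of `t ↦ max 1 t` and `t ↦ (max 1 t)^{-1/2}` applied to `φ(1)`. -/
theorem powers_stormer_estimate
    (M : VonNeumannAlgebra H) (tr : FaithfulNormalTrace H M)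
    (φ : (H →L[ℂ] H) →ₗ[ℂ] (H →L[ℂ] H)) (hφ : IsNormalCP H M φ)
    (a : H →L[ℂ] H) (ha : a = cfc (fun t : ℝ => max 1 t) (φ 1))
    (ainvsqrt : H →L[ℂ] H)
    (hainvsqrt : ainvsqrt = cfc (fun t : ℝ => (max 1 t) ^ (-(1 / 2 : ℝ))) (φ 1)) :
    twoNorm H tr.τ (ainvsqrt - 1) ≤ (twoNorm H tr.τ (φ 1 - 1)) ^ ((1 : ℝ) / 2) := by
  obtain ⟨hmap, -, hcp⟩ := hφ
  -- notation
  have hbM : φ 1 ∈ M := hmap 1 M.toStarSubalgebra.one_mem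
  have hb : IsSelfAdjoint (φ 1) := by
    apply psAux_selfAdjoint
    intro ξ
    have h := hcp 1 (fun _ => 1) (fun _ => ξ) (fun _ => M.toStarSubalgebra.one_mem)
    simpa using h
  set b : H →L[ℂ] H := φ 1 with hbdef
  set f : ℝ → ℝ := fun t => (max 1 t) ^ (-(1 / 2 : ℝ)) with hfdef
  have hfc : Continuous f :=
    (continuous_const.max continuous_id).rpow_const
      (fun x => Or.inl (ne_of_gt (lt_of_lt_of_le zero_lt_one (le_max_left 1 x))))
  set F : ℝ → ℝ := fun t => f t - 1 with hFdef
  have hFc : Continuous F := hfc.sub continuous_const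
  set G : ℝ → ℝ := fun t => F t * F t with hGdef
  have hGc : Continuous G := hFc.mul hFc
  set L : ℝ → ℝ := fun t => |t - 1| with hLdef
  have hLc : Continuous L := (continuous_id.sub continuous_const).abs
  have hL0 : ∀ t, 0 ≤ L t := fun t => abs_nonneg _
  set K : ℝ → ℝ := fun t => (t - 1) * (t - 1) with hKdef
  have hKc : Continuous K :=
    (continuous_id.sub continuous_const).mul (continuous_id.sub continuous_const)
  -- express `ainvsqrt - 1` as `cfc F b`
  have h1 : cfc F b = ainvsqrt - 1 := by
    rw [hainvsqrt, hFdef]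
    have h := cfc_sub f (fun _ => (1 : ℝ)) b hfc.continuousOn continuousOn_const
    rw [cfc_const_one ℝ b] at h
    exact h
  have hFsa : IsSelfAdjoint (cfc F b) := cfc_predicate _ b
  have h2 : star (ainvsqrt - 1) * (ainvsqrt - 1) = cfc G b := by
    rw [← h1, hFsa.star_eq, hGdef, ← cfc_mul F F b hFc.continuousOn hFc.continuousOn]
  -- express `φ 1 - 1` as `cfc (· - 1) b`
  have h3 : cfc (fun t : ℝ => t - 1) b = φ 1 - 1 := by
    have h := cfc_sub (fun t : ℝ => t) (fun _ => (1 : ℝ)) b continuousOn_id continuousOn_const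
    rw [cfc_const_one ℝ b, cfc_id' ℝ b] at h
    rw [← hbdef]
    exact h
  have hIsa : IsSelfAdjoint (cfc (fun t : ℝ => t - 1) b) := cfc_predicate _ b
  have h4 : star (φ 1 - 1) * (φ 1 - 1) = cfc K b := by
    rw [← h3, hIsa.star_eq, hKdef, ← cfc_mul (fun t : ℝ => t - 1) (fun t : ℝ => t - 1) b
      (continuous_id.sub continuous_const).continuousOn
      (continuous_id.sub continuous_const).continuousOn]
  set A : ℝ := (tr.τ (cfc G b)).re with hA
  set B : ℝ := (tr.τ (cfc K b)).re with hB
  set s : ℝ := (tr.τ (cfc L b)).re with hs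
  -- step 1: `A ≤ s`
  have hAs : A ≤ s := psAux_tr_mono M tr hbM hb G L hGc hLc (fun t => psAux_pointwise t)
  -- the trace of `cfc L b` is real and nonnegative
  have hLsq := psAux_cfc_eq_star_mul_self hb L hLc hL0
  have hcM : cfc (fun t => Real.sqrt (L t)) b ∈ M :=
    psAux_cfc_mem M hbM hb _ (Real.continuous_sqrt.comp hLc)
  have hre := psAux_tr_pos_re M tr hcM
  have hτx : tr.τ (cfc L b) = (s : ℂ) := by rw [hs, hLsq]; exact hre.1
  have hs0 : 0 ≤ s := by rw [hs, hLsq]; exact hre.2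
  -- step 2 (Cauchy–Schwarz): `s * s ≤ B`
  have hxM : cfc L b ∈ M := psAux_cfc_mem M hbM hb _ hLc
  have hxsa : IsSelfAdjoint (cfc L b) := cfc_predicate _ b
  have hxx : cfc L b * cfc L b = cfc K b := by
    rw [← cfc_mul L L b hLc.continuousOn hLc.continuousOn]
    exact cfc_congr fun t _ => abs_mul_abs_self _
  set y : H →L[ℂ] H := cfc L b - (s : ℂ) • 1 with hy
  have hyM : y ∈ M := sub_mem hxM (M.toStarSubalgebra.smul_mem M.toStarSubalgebra.one_mem (s : ℂ))
  have hystar : star y = y := by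
    rw [hy, star_sub, star_smul, hxsa.star_eq]
    simp [Complex.conj_ofReal]
  have hyy : tr.τ (star y * y) = tr.τ (cfc K b) - ((s : ℂ) * (s : ℂ)) := by
    rw [hystar, hy]
    have : (cfc L b - (s : ℂ) • 1) * (cfc L b - (s : ℂ) • 1)
        = cfc L b * cfc L b - (s : ℂ) • cfc L b - (s : ℂ) • cfc L b
          + ((s : ℂ) * (s : ℂ)) • 1 := by
      simp only [sub_mul, mul_sub, smul_mul_assoc, mul_smul_comm, one_mul, mul_one, smul_smul]
      module
    rw [this, hxx]
    simp only [map_add, map_sub, map_smul, tr.unital, hτx, smul_eq_mul, mul_one]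
    ring
  have hCS : s * s ≤ B := by
    have hpos := (psAux_tr_pos_re M tr hyM).2
    rw [hyy] at hpos
    simp only [Complex.sub_re, Complex.mul_re, Complex.ofReal_re, Complex.ofReal_im] at hpos
    rw [hB]
    linarith
  have hsB : s ≤ Real.sqrt B := by
    have h := Real.sqrt_le_sqrt hCS
    rwa [Real.sqrt_mul_self hs0] at h
  -- conclusion
  have hchain : A ≤ Real.sqrt B := le_trans hAs hsB
  simp only [twoNorm]
  rw [h2, h4, ← hA, ← hB]
  calc Real.sqrt A ≤ Real.sqrt (Real.sqrt B) := Real.sqrt_le_sqrt hchain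
    _ = (Real.sqrt B) ^ ((1 : ℝ) / 2) := by
        rw [Real.sqrt_eq_rpow]
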